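/- If {a_n} is a strictly moderate sequence and p(n) is any polynomial in n with positive values, then p(n)·exp(-n·a_n²) = exp(-n·b_n²) for some moderate sequence {b_n}, and for any η > 0 there exists N such that b_n ≤ a_n + η·a_n for all n ≥ N. -/

import Mathlib

open Filter

/-- A moderate sequence: nonnegative, a_n → 0, and n·a_n² → ∞. -/
def Moderate (a : ℕ → ℝ) : Prop :=
  (∀ n, 0 ≤ a n) ∧ Filter.Tendsto a Filter.atTop (nhds 0) ∧
    Filter.Tendsto (fun n : ℕ => (n : ℝ) * (a n) ^ 2) Filter.atTop Filter.atTop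

/-- A strictly moderate sequence additionally satisfies n·a_n²/log n → ∞. -/
def StrictlyModerate (a : ℕ → ℝ) : Prop :=
  Moderate a ∧
    Filter.Tendsto (fun n : ℕ => (n : ℝ) * (a n) ^ 2 / Real.log n) Filter.atTop Filter.atTop

theorem stmt_1 (a : ℕ → ℝ) (ha : StrictlyModerate a) (p : Polynomial ℝ)
    (hp : ∀ n : ℕ, 0 < p.eval (n : ℝ)) :
    ∃ b : ℕ → ℝ, Moderate b ∧
      (∀ᶠ n : ℕ in atTop,
        p.eval (n : ℝ) * Real.exp (-((n : ℝ) * (a n) ^ 2)) =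
          Real.exp (-((n : ℝ) * (b n) ^ 2))) ∧
      ∀ η > 0, ∃ N : ℕ, ∀ n ≥ N, b n ≤ a n + η * a n := by
  obtain ⟨⟨hpos, hlim0, hlimS⟩, hstrict⟩ := ha
  set L : ℕ → ℝ := fun n => Real.log (p.eval (n : ℝ)) with hLdef
  set b : ℕ → ℝ := fun n => Real.sqrt (max 0 (a n ^ 2 - L n / n)) with hbdef
  set d : ℕ := p.natDegree with hddef
  set M : ℝ := ∑ i ∈ Finset.range (d + 1), |p.coeff i| with hMdef
  have hMpos : 0 < M := by
    have hpne : p ≠ 0 := fun h => by simpa [h] using hp 0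
    have h1 : |p.coeff d| ≤ M := by
      apply Finset.single_le_sum (f := fun i => |p.coeff i|)
        (fun i _ => abs_nonneg _)
      simp [Finset.mem_range]
    have h2 : 0 < |p.coeff d| := by
      rw [abs_pos]
      exact Polynomial.leadingCoeff_ne_zero.mpr hpne
    linarith
  -- upper bound on L
  have hub : ∀ n : ℕ, 1 ≤ n → L n ≤ Real.log M + d * Real.log n := by
    intro n hn
    have hn1 : (1 : ℝ) ≤ (n : ℝ) := by exact_mod_cast hn
    have hnpos : (0 : ℝ) < (n : ℝ) := lt_of_lt_of_le one_pos hn1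
    have heval : p.eval (n : ℝ) ≤ M * (n : ℝ) ^ d := by
      rw [Polynomial.eval_eq_sum_range, hMdef, Finset.sum_mul]
      apply Finset.sum_le_sum
      intro i hi
      have hi' : i ≤ d := Nat.lt_succ_iff.mp (Finset.mem_range.mp hi)
      calc p.coeff i * (n : ℝ) ^ i ≤ |p.coeff i| * (n : ℝ) ^ i := by
            apply mul_le_mul_of_nonneg_right (le_abs_self _) (by positivity)
        _ ≤ |p.coeff i| * (n : ℝ) ^ d := by
            apply mul_le_mul_of_nonneg_left _ (abs_nonneg _)
            exact pow_le_pow_right₀ hn1 hi'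
    calc L n ≤ Real.log (M * (n : ℝ) ^ d) := Real.log_le_log (hp n) heval
      _ = Real.log M + d * Real.log n := by
          rw [Real.log_mul (ne_of_gt hMpos) (by positivity), Real.log_pow]
  -- lower bound on L
  have hlb : ∃ C : ℝ, 0 ≤ C ∧ ∀ᶠ n : ℕ in atTop, -C ≤ L n := by
    by_cases hd : d = 0
    · refine ⟨|Real.log (p.coeff 0)|, abs_nonneg _, Eventually.of_forall fun n => ?_⟩
      have : p = Polynomial.C (p.coeff 0) := Polynomial.eq_C_of_natDegree_eq_zero hd
      have hLn : L n = Real.log (p.coeff 0) := by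
        simp only [hLdef]; conv_lhs => rw [this]
        simp
      rw [hLn]
      exact neg_abs_le _
    · refine ⟨0, le_refl _, ?_⟩
      have hdeg : 0 < p.degree :=
        Polynomial.natDegree_pos_iff_degree_pos.mp (Nat.pos_of_ne_zero hd)
      have habs : Tendsto (fun n : ℕ => |p.eval (n : ℝ)|) atTop atTop :=
        (Polynomial.abs_tendsto_atTop p hdeg).comp tendsto_natCast_atTop_atTop
      filter_upwards [habs.eventually_ge_atTop 1] with n hn
      have : (1 : ℝ) ≤ p.eval (n : ℝ) := by
        rwa [abs_of_pos (hp n)] at hn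
      simpa using Real.log_nonneg this
  obtain ⟨C, hC0, hCe⟩ := hlb
  -- log n → ∞
  have hlogn : Tendsto (fun n : ℕ => Real.log n) atTop atTop :=
    Real.tendsto_log_atTop.comp tendsto_natCast_atTop_atTop
  -- n a² - L n → ∞
  have hdiff : Tendsto (fun n : ℕ => (n : ℝ) * a n ^ 2 - L n) atTop atTop := by
    have h1 : Tendsto (fun n : ℕ => Real.log n - Real.log M) atTop atTop :=
      tendsto_atTop_add_const_right _ _ hlogn
    apply tendsto_atTop_mono' atTop _ h1
    filter_upwards [hstrict.eventually_ge_atTop ((d : ℝ) + 1),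
      hlogn.eventually_gt_atTop 0, eventually_ge_atTop 1] with n hn hln hn1
    have hub' := hub n hn1
    have : ((d : ℝ) + 1) * Real.log n ≤ (n : ℝ) * a n ^ 2 :=
      (le_div_iff₀ hln).mp hn
    nlinarith [hln]
  -- eventually the inner expression is nonneg and things simplify
  have hbsq : ∀ n, b n ^ 2 = max 0 (a n ^ 2 - L n / n) :=
    fun n => Real.sq_sqrt (le_max_left _ _)
  have hkey : ∀ᶠ n : ℕ in atTop,
      b n ^ 2 = a n ^ 2 - L n / n ∧ (n : ℝ) * b n ^ 2 = (n : ℝ) * a n ^ 2 - L n := by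
    filter_upwards [hdiff.eventually_ge_atTop 0, eventually_ge_atTop 1] with n hn hn1
    have hnpos : (0 : ℝ) < (n : ℝ) := by exact_mod_cast Nat.lt_of_lt_of_le Nat.zero_lt_one hn1
    have hrw : a n ^ 2 - L n / n = ((n : ℝ) * a n ^ 2 - L n) / n := by
      field_simp
    have hnn : 0 ≤ a n ^ 2 - L n / n := by
      rw [hrw]; exact div_nonneg hn hnpos.le
    have h1 : b n ^ 2 = a n ^ 2 - L n / n := by rw [hbsq n, max_eq_right hnn]
    refine ⟨h1, ?_⟩
    rw [h1, hrw, mul_div_cancel₀ _ (ne_of_gt hnpos)]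
  have hgle : ∀ᶠ n : ℕ in atTop,
      max 0 (a n ^ 2 - L n / n) ≤ a n ^ 2 + C / n := by
    filter_upwards [hCe, eventually_ge_atTop 1] with n hn hn1
    have hnpos : (0 : ℝ) < (n : ℝ) := by
      exact_mod_cast Nat.lt_of_lt_of_le Nat.zero_lt_one hn1
    apply max_le (by positivity)
    have h2 : -L n / (n : ℝ) ≤ C / n := by gcongr; linarith
    rw [sub_eq_add_neg, ← neg_div]
    linarith
  refine ⟨b, ⟨fun n => Real.sqrt_nonneg _, ?_, ?_⟩, ?_, ?_⟩
  · -- b → 0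
    have hg : Tendsto (fun n : ℕ => max 0 (a n ^ 2 - L n / n)) atTop (nhds 0) := by
      apply squeeze_zero' (Eventually.of_forall fun n => le_max_left _ _) hgle
      have h1 : Tendsto (fun n : ℕ => a n ^ 2) atTop (nhds 0) := by
        have := hlim0.pow 2
        simpa using this
      have h2 : Tendsto (fun n : ℕ => C / (n : ℝ)) atTop (nhds 0) :=
        tendsto_const_div_atTop_nhds_zero_nat C
      simpa using h1.add h2
    have := (Real.continuous_sqrt.tendsto 0).comp hg
    rw [Real.sqrt_zero] at this
    exact this
  · -- n b² → ∞
    apply Tendsto.congr' _ hdiff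
    filter_upwards [hkey] with n hn
    exact hn.2.symm
  · -- eventual equation
    filter_upwards [hkey] with n hn
    rw [hn.2, ← Real.exp_log (hp n), ← Real.exp_add]
    ring_nf
    simp only [hLdef]; ring_nf
  · -- η bound
    intro η hη
    have hε : 0 < 2 * η + η ^ 2 := by positivity
    have hev : ∀ᶠ n : ℕ in atTop, b n ≤ a n + η * a n := by
      filter_upwards [hgle, eventually_ge_atTop 1,
        hlimS.eventually_ge_atTop (C / (2 * η + η ^ 2))] with n hn hn1 hnS
      have hnpos : (0 : ℝ) < (n : ℝ) := by
        exact_mod_cast Nat.lt_of_lt_of_le Nat.zero_lt_one hn1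
      have hCn : C / n ≤ (2 * η + η ^ 2) * a n ^ 2 := by
        rw [div_le_iff₀ hnpos]
        rw [div_le_iff₀ hε] at hnS
        nlinarith [hnS]
      have hb2 : b n ^ 2 ≤ ((1 + η) * a n) ^ 2 := by
        rw [hbsq n]
        nlinarith [hn, hCn]
      have h3 := Real.sqrt_le_sqrt hb2
      rw [Real.sqrt_sq (Real.sqrt_nonneg _),
        Real.sqrt_sq (mul_nonneg (by linarith) (hpos n))] at h3
      linarith
    obtain ⟨N, hN⟩ := eventually_atTop.mp hev
    exact ⟨N, hN⟩
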